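/- Let μ₊, μ₋ be probability measures on ℝ^p, let π ∈ [0,1), let μ = π·μ₊ + (1−π)·μ₋, and let f : ℝ^p → ℝ be measurable with (μ₊ ⊗ μ₊){(x, x') : f(x) ≥ f(x')} = 1/2. Then AUC(f; μ₊, μ₋) = (1−π)⁻¹·(BAUC(f; μ₊, μ) − π/2). -/

import Mathlib

open MeasureTheory
open scoped NNReal ENNReal

lemma prod_smul_right {α β : Type*} [MeasurableSpace α] [MeasurableSpace β]
    (μ : Measure α) (ν : Measure β) [SFinite μ] [SFinite ν] (c : ℝ≥0∞) (hc : c ≠ ⊤) :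
    μ.prod (c • ν) = c • μ.prod ν := by
  ext s hs
  rw [Measure.prod_apply hs, Measure.smul_apply, Measure.prod_apply hs]
  simp only [Measure.smul_apply, smul_eq_mul]
  rw [lintegral_const_mul' _ _ hc]

theorem stmt2 (p : ℕ) (μp μm : Measure (Fin p → ℝ))
    [IsProbabilityMeasure μp] [IsProbabilityMeasure μm]
    (π : ℝ≥0) (hπ : π < 1)
    (μ : Measure (Fin p → ℝ)) (hμ : μ = π • μp + (1 - π) • μm)
    (f : (Fin p → ℝ) → ℝ) (hf : Measurable f)
    (hhalf : (μp.prod μp) {q : (Fin p → ℝ) × (Fin p → ℝ) | f q.1 ≥ f q.2} = 1 / 2) :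
    ((μp.prod μm) {q : (Fin p → ℝ) × (Fin p → ℝ) | f q.1 ≥ f q.2}).toReal
      = (1 - (π : ℝ))⁻¹ *
        (((μp.prod μ) {q : (Fin p → ℝ) × (Fin p → ℝ) | f q.1 ≥ f q.2}).toReal
          - (π : ℝ) / 2) := by
  set S := {q : (Fin p → ℝ) × (Fin p → ℝ) | f q.1 ≥ f q.2} with hS
  have hπle : π ≤ 1 := hπ.le
  have key : (μp.prod μ) S = (π : ℝ≥0∞) * (1/2) + ((1 - π : ℝ≥0) : ℝ≥0∞) * (μp.prod μm) S := by
    rw [hμ, ENNReal.smul_def, ENNReal.smul_def, Measure.prod_add,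
      prod_smul_right _ _ _ ENNReal.coe_ne_top, prod_smul_right _ _ _ ENNReal.coe_ne_top]
    simp [hhalf]
    rw [ENNReal.smul_def, smul_eq_mul]
  have hle : (μp.prod μm) S ≤ 1 := prob_le_one
  have hne : (μp.prod μm) S ≠ ⊤ := (lt_of_le_of_lt hle (by norm_num)).ne
  rw [key]
  have h1 : ((1 - π : ℝ≥0) : ℝ) = 1 - (π : ℝ) := by
    rw [NNReal.coe_sub hπle]; simp
  rw [ENNReal.toReal_add (ENNReal.mul_ne_top ENNReal.coe_ne_top (by norm_num))
      (ENNReal.mul_ne_top ENNReal.coe_ne_top hne),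
    ENNReal.toReal_mul, ENNReal.toReal_mul]
  simp only [ENNReal.coe_toReal, ENNReal.toReal_div, ENNReal.toReal_one,
    ENNReal.toReal_ofNat, h1]
  have hne' : (1 : ℝ) - π ≠ 0 := by
    have : (π : ℝ) < 1 := by exact_mod_cast hπ
    linarith
  field_simp
  ring
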